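/- Let A be a finite-dimensional local algebra over a field k (i.e., A has a unique maximal left ideal). If the simple left A-module is reflexive, then A is self-injective. -/

import Mathlib

universe u

/-- The evaluation map `φ_M` from a left `R`-module `M` into its double `R`-dual
`M** = Hom_{Rᵒᵖ}(Hom_R(M, R), R)`. -/
def dualEval (R : Type u) [Ring R] (M : Type u) [AddCommGroup M] [Module R M] :
    M →ₗ[R] ((M →ₗ[R] R) →ₗ[Rᵐᵒᵖ] R) where
  toFun m :=
    { toFun := fun f => f m
      map_add' := fun f g => rfl
      map_smul' := fun a f => rfl }
  map_add' m m' := by ext f; simp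
  map_smul' a m := by ext f; simp

open MulOpposite Module

open MulOpposite

section Basic
variable {A : Type u} [Ring A] {m : Ideal A}

theorem loc_nontrivial (hm : m.IsMaximal) : Nontrivial A := by
  refine ⟨0, 1, fun h => hm.ne_top ?_⟩
  rw [Ideal.eq_top_iff_one]
  exact h ▸ m.zero_mem

theorem loc_left_inv (hm : m.IsMaximal) (hu : ∀ I : Ideal A, I.IsMaximal → I = m)
    {x : A} (hx : x ∉ m) : ∃ y, y * x = 1 := by
  by_cases h : Ideal.span {x} = ⊤
  · have h1 : (1 : A) ∈ Ideal.span {x} := h ▸ Submodule.mem_top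
    obtain ⟨y, hy⟩ := Submodule.mem_span_singleton.mp h1
    exact ⟨y, by simpa [smul_eq_mul] using hy⟩
  · obtain ⟨M, hM, hle⟩ := Ideal.exists_le_maximal _ h
    exact absurd (hu M hM ▸ hle (Ideal.subset_span rfl)) hx

theorem loc_two_sided (hm : m.IsMaximal) (hu : ∀ I : Ideal A, I.IsMaximal → I = m)
    {x : A} (hx : x ∈ m) (a : A) : x * a ∈ m := by
  have hnt : Nontrivial A := loc_nontrivial hm
  by_contra hxa
  obtain ⟨y, hy⟩ := loc_left_inv hm hu hxa
  set u := y * x with hu'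
  have hum : u ∈ m := m.mul_mem_left y hx
  have hua : u * a = 1 := by rw [hu', mul_assoc]; exact hy
  set e := a * u with he'
  have hem : e ∈ m := m.mul_mem_left a hum
  have h1e : (1 : A) - e ∈ m := by
    by_contra h1e
    obtain ⟨z, hz⟩ := loc_left_inv hm hu h1e
    have hea : (1 - e) * a = 0 := by
      rw [sub_mul, one_mul, he', mul_assoc, hua, mul_one, sub_self]
    have ha0 : a = 0 := by
      calc a = (z * (1 - e)) * a := by rw [hz, one_mul]
      _ = z * ((1 - e) * a) := by rw [mul_assoc]
      _ = 0 := by rw [hea, mul_zero]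
    have : (1 : A) = 0 := by rw [← hua, ha0, mul_zero]
    exact one_ne_zero this
  have : (1 : A) ∈ m := by
    have := m.add_mem hem h1e
    simpa using this
  exact hm.ne_top (Ideal.eq_top_iff_one m |>.mpr this)

theorem loc_unit (hm : m.IsMaximal) (hu : ∀ I : Ideal A, I.IsMaximal → I = m)
    {x : A} (hx : x ∉ m) : ∃ y, y * x = 1 ∧ x * y = 1 := by
  obtain ⟨y, hy⟩ := loc_left_inv hm hu hx
  have hym : y ∉ m := by
    intro hym
    have : (1 : A) ∈ m := hy ▸ loc_two_sided hm hu hym x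
    exact hm.ne_top (Ideal.eq_top_iff_one m |>.mpr this)
  obtain ⟨z, hz⟩ := loc_left_inv hm hu hym
  have hzx : z = x := by
    calc z = z * (y * x) := by rw [hy, mul_one]
    _ = (z * y) * x := by rw [mul_assoc]
    _ = x := by rw [hz, one_mul]
  exact ⟨y, hy, hzx ▸ hz⟩

/-- `m` is also maximal as a right ideal. -/
theorem loc_right_max (hm : m.IsMaximal) (hu : ∀ I : Ideal A, I.IsMaximal → I = m)
    (K : Submodule Aᵐᵒᵖ A) (hmK : ∀ c ∈ m, c ∈ K) (h1 : (1 : A) ∉ K) :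
    ∀ x ∈ K, x ∈ m := by
  intro x hx
  by_contra hxm
  obtain ⟨y, _, hxy⟩ := loc_unit hm hu hxm
  have : (1 : A) ∈ K := by
    have := K.smul_mem (op y) hx
    rwa [op_smul_eq_mul, hxy] at this
  exact h1 this

end Basic

open MulOpposite Module


def Lsub {A : Type u} [Ring A] (m : Ideal A) : Submodule Aᵐᵒᵖ A where
  carrier := {x | ∀ c ∈ m, c * x = 0}
  add_mem' := by intro x y hx hy c hc; rw [mul_add, hx c hc, hy c hc, add_zero]
  zero_mem' := by intro c _; rw [mul_zero]
  smul_mem' := by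
    intro b x hx c hc
    calc c * (b • x) = (c * x) * b.unop := by
          rw [MulOpposite.smul_eq_mul_unop, ← mul_assoc]
    _ = 0 := by rw [hx c hc, zero_mul]

theorem mem_Lsub {A : Type u} [Ring A] {m : Ideal A} {x : A} :
    x ∈ Lsub m ↔ ∀ c ∈ m, c * x = 0 := Iff.rfl

section ThetaSec
variable {A : Type u} [Ring A] (m : Ideal A)

theorem f_one_mem (f : (A ⧸ m) →ₗ[A] A) : f (Submodule.Quotient.mk 1) ∈ Lsub m := by
  intro c hc
  have h1 : (c • Submodule.Quotient.mk (1 : A) : A ⧸ m) = 0 := by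
    rw [← Submodule.Quotient.mk_smul, smul_eq_mul, mul_one]
    exact (Submodule.Quotient.mk_eq_zero m).mpr hc
  calc c * f (Submodule.Quotient.mk 1)
      = f (c • Submodule.Quotient.mk 1) := by rw [map_smul, smul_eq_mul]
  _ = 0 := by rw [h1, map_zero]

/-- `x ↦ a * x` on `Lsub m` is right `A`-linear; bundled as a `k`-linear map in `a`. -/
def Θmap (k : Type u) [Field k] [Algebra k A] : A →ₗ[k] (↥(Lsub m) →ₗ[Aᵐᵒᵖ] A) where
  toFun a :=
    { toFun := fun x => a * (x : A)
      map_add' := by intro x y; simp [mul_add]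
      map_smul' := by
        intro b x
        simp only [Submodule.coe_smul, MulOpposite.smul_eq_mul_unop, RingHom.id_apply]
        rw [← mul_assoc] }
  map_add' a a' := by ext x; simp [add_mul]
  map_smul' c a := by ext x; simp [smul_mul_assoc]

/-- The map `x ↦ a x : A/m → A` attached to `x ∈ Lsub m`. -/
def fxmap (x : A) (hx : x ∈ Lsub m) : (A ⧸ m) →ₗ[A] A :=
  Submodule.liftQ m (LinearMap.toSpanSingleton A A x)
    (fun c hc => by
      simp only [LinearMap.mem_ker, LinearMap.toSpanSingleton_apply, smul_eq_mul]
      exact hx c hc)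

theorem fxmap_apply (x : A) (hx : x ∈ Lsub m) (a : A) :
    fxmap m x hx (Submodule.Quotient.mk a) = a * x := by
  simp [fxmap, LinearMap.toSpanSingleton_apply, smul_eq_mul]

/-- The element of `S**` attached to a right-linear `ψ : Lsub m → A`. -/
def Fmap (ψ : ↥(Lsub m) →ₗ[Aᵐᵒᵖ] A) : ((A ⧸ m) →ₗ[A] A) →ₗ[Aᵐᵒᵖ] A where
  toFun f := ψ ⟨f (Submodule.Quotient.mk 1), f_one_mem m f⟩
  map_add' f g := by
    show ψ ⟨(f + g) (Submodule.Quotient.mk 1), f_one_mem m _⟩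
        = ψ ⟨f (Submodule.Quotient.mk 1), f_one_mem m f⟩
          + ψ ⟨g (Submodule.Quotient.mk 1), f_one_mem m g⟩
    rw [← map_add]
    exact congrArg ψ (by ext; simp)
  map_smul' b f := by
    show ψ ⟨(b • f) (Submodule.Quotient.mk 1), f_one_mem m _⟩
        = b • ψ ⟨f (Submodule.Quotient.mk 1), f_one_mem m f⟩
    rw [← map_smul]
    exact congrArg ψ (by ext; simp)

theorem theta_surj (hbij : Function.Bijective (dualEval A (A ⧸ m)))
    (ψ : ↥(Lsub m) →ₗ[Aᵐᵒᵖ] A) : ∃ a, ∀ x : ↥(Lsub m), ψ x = a * (x : A) := by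
  obtain ⟨s, hs⟩ := hbij.2 (Fmap m ψ)
  obtain ⟨a, rfl⟩ := Submodule.Quotient.mk_surjective m s
  refine ⟨a, fun x => ?_⟩
  have h2 := congrArg (fun g : ((A ⧸ m) →ₗ[A] A) →ₗ[Aᵐᵒᵖ] A => g (fxmap m x.1 x.2)) hs
  simp only [dualEval, LinearMap.coe_mk, AddHom.coe_mk] at h2
  have hL : fxmap m x.1 x.2 (Submodule.Quotient.mk a) = a * x.1 := fxmap_apply m x.1 x.2 a
  have hR : Fmap m ψ (fxmap m x.1 x.2) = ψ x := by
    simp only [Fmap, LinearMap.coe_mk, AddHom.coe_mk]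
    congr 1
    ext
    simp [fxmap_apply]
  rw [hL, hR] at h2
  exact h2.symm

theorem theta_ker (hbij : Function.Bijective (dualEval A (A ⧸ m)))
    (a : A) (ha : ∀ x ∈ Lsub m, a * x = 0) : a ∈ m := by
  have hmk : (Submodule.Quotient.mk a : A ⧸ m) = a • Submodule.Quotient.mk 1 := by
    rw [← Submodule.Quotient.mk_smul, smul_eq_mul, mul_one]
  have h0 : dualEval A (A ⧸ m) (Submodule.Quotient.mk a) = 0 := by
    apply LinearMap.ext
    intro f
    have : f (Submodule.Quotient.mk a) = 0 := by
      rw [hmk, map_smul, smul_eq_mul]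
      exact ha _ (f_one_mem m f)
    simpa [dualEval] using this
  have := hbij.1 (a₁ := Submodule.Quotient.mk a) (a₂ := 0) (by rw [h0, map_zero])
  exact (Submodule.Quotient.mk_eq_zero m).mp this

end ThetaSec

section RDefs
variable {A : Type u} [Ring A]
/-- Right annihilator of `m`, as a right ideal. -/
def Rsub (m : Ideal A) : Submodule Aᵐᵒᵖ A where
  carrier := {x | ∀ c ∈ m, x * c = 0}
  add_mem' := by intro x y hx hy c hc; rw [add_mul, hx c hc, hy c hc, add_zero]
  zero_mem' := by intro c _; rw [zero_mul]
  smul_mem' := by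
    intro b x hx c hc
    have : x * (b.unop * c) = 0 := hx _ (m.mul_mem_left _ hc)
    calc (b • x) * c = x * (b.unop * c) := by
          rw [MulOpposite.smul_eq_mul_unop, mul_assoc]
    _ = 0 := this

@[simp] theorem mem_Rsub {m : Ideal A} {x : A} : x ∈ Rsub m ↔ ∀ c ∈ m, x * c = 0 := Iff.rfl

end RDefs

open MulOpposite FiniteDimensional Module

section Min
variable {A : Type u} [Ring A]
variable {B : Type u} [Ring B] [Module B A]

theorem exists_minimal_sub (k : Type u) [Field k] [Algebra k A] [FiniteDimensional k A]
    [SMul k B] [IsScalarTower k B A] (K : Submodule B A) (hK : K ≠ ⊥) :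
    ∃ K₀ : Submodule B A, K₀ ≤ K ∧ K₀ ≠ ⊥ ∧
      ∀ V : Submodule B A, V ≤ K₀ → V ≠ ⊥ → V = K₀ := by
  suffices H : ∀ (n : ℕ) (K : Submodule B A), K ≠ ⊥ →
      finrank k (K.restrictScalars k) ≤ n →
      ∃ K₀ : Submodule B A, K₀ ≤ K ∧ K₀ ≠ ⊥ ∧
        ∀ V : Submodule B A, V ≤ K₀ → V ≠ ⊥ → V = K₀ by
    exact H (finrank k (K.restrictScalars k)) K hK le_rfl
  intro n
  induction n with
  | zero =>
    intro K hK h0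
    exfalso
    have hz : finrank k (K.restrictScalars k) = 0 := Nat.le_zero.mp h0
    have : K.restrictScalars k = ⊥ := Submodule.finrank_eq_zero.mp hz
    exact hK ((Submodule.restrictScalars_eq_bot_iff k B A).mp this)
  | succ n ih =>
    intro K hK hle
    by_cases hmin : ∀ V : Submodule B A, V ≤ K → V ≠ ⊥ → V = K
    · exact ⟨K, le_rfl, hK, hmin⟩
    · push_neg at hmin
      obtain ⟨V, hVK, hVne, hVK'⟩ := hmin
      have hlt : V.restrictScalars k < K.restrictScalars k :=
        lt_of_le_of_ne (fun x hx => hVK hx)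
          (fun h => hVK' (Submodule.restrictScalars_injective k _ _ h))
      have hfr : finrank k (V.restrictScalars k) < finrank k (K.restrictScalars k) :=
        Submodule.finrank_lt_finrank_of_lt hlt
      obtain ⟨K₀, h1, h2, h3⟩ := ih V hVne (by omega)
      exact ⟨K₀, h1.trans hVK, h2, h3⟩

end Min

section Rank
variable {k A : Type u} [Field k] [Ring A] [Algebra k A] [FiniteDimensional k A]
variable {m : Ideal A}

/-- Left multiplication by `z` as a right-`A`-linear map. -/
def χmap {A : Type u} [Ring A] (z : A) : A →ₗ[Aᵐᵒᵖ] A where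
  toFun a := z * a
  map_add' := by intro a b; simp [mul_add]
  map_smul' := by
    intro b a
    simp only [MulOpposite.smul_eq_mul_unop, RingHom.id_apply]
    rw [← mul_assoc]

theorem ker_theta_eq (hbij : Function.Bijective (dualEval A (A ⧸ m))) :
    LinearMap.ker (Θmap m k) = m.restrictScalars k := by
  ext a
  simp only [LinearMap.mem_ker, Submodule.restrictScalars_mem]
  constructor
  · intro h
    refine theta_ker m hbij a (fun x hx => ?_)
    have := congrArg (fun g : ↥(Lsub m) →ₗ[Aᵐᵒᵖ] A => g ⟨x, hx⟩) h
    simpa [Θmap] using this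
  · intro ha
    apply LinearMap.ext
    intro x
    have : a * (x : A) = 0 := x.2 a ha
    simpa [Θmap] using this

theorem surj_theta (hbij : Function.Bijective (dualEval A (A ⧸ m))) :
    Function.Surjective (Θmap m k (A := A)) := by
  intro ψ
  obtain ⟨a, ha⟩ := theta_surj m hbij ψ
  refine ⟨a, LinearMap.ext fun x => ?_⟩
  simpa [Θmap] using (ha x).symm

theorem findim_H (hbij : Function.Bijective (dualEval A (A ⧸ m))) :
    FiniteDimensional k (↥(Lsub m) →ₗ[Aᵐᵒᵖ] A) :=
  Module.Finite.of_surjective (Θmap m k) (surj_theta hbij)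

theorem finrank_H (hbij : Function.Bijective (dualEval A (A ⧸ m))) :
    Module.finrank k (↥(Lsub m) →ₗ[Aᵐᵒᵖ] A)
      + Module.finrank k (m.restrictScalars k) = Module.finrank k A := by
  haveI := findim_H (k := k) hbij
  have h := LinearMap.finrank_range_add_finrank_ker (Θmap m k (A := A))
  rwa [ker_theta_eq hbij, LinearMap.range_eq_top.mpr (surj_theta hbij), finrank_top] at h

theorem finrank_span_z (hm : m.IsMaximal) (hu : ∀ I : Ideal A, I.IsMaximal → I = m)
    {z : A} (hz : z ∈ Rsub m) (hz0 : z ≠ 0) :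
    Module.finrank k ((Submodule.span Aᵐᵒᵖ {z}).restrictScalars k)
      + Module.finrank k (m.restrictScalars k) = Module.finrank k A := by
  let θ : A →ₗ[k] A :=
    { toFun := fun a => z * a
      map_add' := by intro a b; simp [mul_add]
      map_smul' := by intro c a; simp [mul_smul_comm] }
  have hker : LinearMap.ker θ = m.restrictScalars k := by
    ext a
    simp only [LinearMap.mem_ker, Submodule.restrictScalars_mem]
    constructor
    · intro h
      refine loc_right_max hm hu (LinearMap.ker (χmap z)) (fun c hc => ?_) ?_ a ?_
      · simpa [χmap, LinearMap.mem_ker] using hz c hc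
      · simp only [LinearMap.mem_ker, χmap, LinearMap.coe_mk, AddHom.coe_mk, mul_one]
        exact hz0
      · simpa [χmap, LinearMap.mem_ker, θ] using h
    · intro ha
      simpa [θ] using hz a ha
  have hrange : LinearMap.range θ = (Submodule.span Aᵐᵒᵖ {z}).restrictScalars k := by
    ext x
    simp only [LinearMap.mem_range, Submodule.restrictScalars_mem]
    constructor
    · rintro ⟨a, rfl⟩
      refine Submodule.mem_span_singleton.mpr ⟨MulOpposite.op a, ?_⟩
      simp [θ, op_smul_eq_mul]
    · intro hx
      obtain ⟨b, hb⟩ := Submodule.mem_span_singleton.mp hx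
      exact ⟨b.unop, by simpa [θ, MulOpposite.smul_eq_mul_unop] using hb⟩
  have h := LinearMap.finrank_range_add_finrank_ker θ
  rwa [hker, hrange] at h

end Rank

section Soc
variable {A : Type u} [Ring A] {m : Ideal A}

theorem unit_one_sub (hm : m.IsMaximal) (hu : ∀ I : Ideal A, I.IsMaximal → I = m)
    {c : A} (hc : c ∈ m) : ∃ y, ((1 : A) - c) * y = 1 ∧ y * ((1 : A) - c) = 1 := by
  have h1 : (1 : A) - c ∉ m := by
    intro hh
    exact hm.ne_top ((Ideal.eq_top_iff_one m).mpr (by simpa using m.add_mem hh hc))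
  obtain ⟨y, hy1, hy2⟩ := loc_unit hm hu h1
  exact ⟨y, hy2, hy1⟩

theorem min_le_Rsub (hm : m.IsMaximal) (hu : ∀ I : Ideal A, I.IsMaximal → I = m)
    (K₀ : Submodule Aᵐᵒᵖ A)
    (hmin : ∀ V : Submodule Aᵐᵒᵖ A, V ≤ K₀ → V ≠ ⊥ → V = K₀) : K₀ ≤ Rsub m := by
  intro x hx c hc
  by_contra h
  have hxc : x * c ∈ K₀ := by
    have := K₀.smul_mem (MulOpposite.op c) hx
    rwa [op_smul_eq_mul] at this
  have hsp : Submodule.span Aᵐᵒᵖ {x * c} = K₀ :=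
    hmin _ (by rwa [Submodule.span_singleton_le_iff_mem])
      (by rwa [ne_eq, Submodule.span_singleton_eq_bot])
  have hxmem : x ∈ Submodule.span Aᵐᵒᵖ {x * c} := hsp ▸ hx
  obtain ⟨b, hb⟩ := Submodule.mem_span_singleton.mp hxmem
  have hx2 : x = x * (c * b.unop) := by
    conv_lhs => rw [← hb]
    rw [MulOpposite.smul_eq_mul_unop, mul_assoc]
  have hc'm : c * b.unop ∈ m := loc_two_sided hm hu hc b.unop
  obtain ⟨y, hy1, _⟩ := unit_one_sub hm hu hc'm
  have hx0 : x = 0 := by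
    have hxc' : x * ((1 : A) - c * b.unop) = 0 := by
      rw [mul_sub, mul_one, ← hx2, sub_self]
    calc x = x * (((1 : A) - c * b.unop) * y) := by rw [hy1, mul_one]
    _ = (x * ((1 : A) - c * b.unop)) * y := by rw [mul_assoc]
    _ = 0 := by rw [hxc', zero_mul]
  exact h (by rw [hx0, zero_mul])

theorem min_le_Lsub (hm : m.IsMaximal) (hu : ∀ I : Ideal A, I.IsMaximal → I = m)
    (I₀ : Ideal A)
    (hmin : ∀ V : Ideal A, V ≤ I₀ → V ≠ ⊥ → V = I₀) : ∀ x ∈ I₀, x ∈ Lsub m := by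
  intro x hx c hc
  by_contra h
  have hcx : c * x ∈ I₀ := I₀.mul_mem_left c hx
  have hsp : Submodule.span A {c * x} = I₀ :=
    hmin _ (by rwa [Submodule.span_singleton_le_iff_mem])
      (by rwa [ne_eq, Submodule.span_singleton_eq_bot])
  have hxmem : x ∈ Submodule.span A {c * x} := hsp ▸ hx
  obtain ⟨b, hb⟩ := Submodule.mem_span_singleton.mp hxmem
  have hx2 : x = (b * c) * x := by
    conv_lhs => rw [← hb]
    rw [smul_eq_mul, mul_assoc]
  have hc'm : b * c ∈ m := m.mul_mem_left b hc
  obtain ⟨y, _, hy2⟩ := unit_one_sub hm hu hc'm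
  have hx0 : x = 0 := by
    have hxc' : ((1 : A) - b * c) * x = 0 := by
      rw [sub_mul, one_mul, ← hx2, sub_self]
    calc x = (y * ((1 : A) - b * c)) * x := by rw [hy2, one_mul]
    _ = y * (((1 : A) - b * c) * x) := by rw [mul_assoc]
    _ = 0 := by rw [hxc', mul_zero]
  exact h (by rw [hx0, mul_zero])

theorem Lsub_ne_bot (k : Type u) [Field k] [Algebra k A] [FiniteDimensional k A] (hm : m.IsMaximal) (hu : ∀ I : Ideal A, I.IsMaximal → I = m) :
    Lsub m ≠ (⊥ : Submodule Aᵐᵒᵖ A) := by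
  haveI := loc_nontrivial hm
  have htop : (⊤ : Ideal A) ≠ ⊥ :=
    Submodule.ne_bot_iff _ |>.mpr ⟨1, Submodule.mem_top, one_ne_zero⟩
  obtain ⟨I₀, _, hne, hmin⟩ := exists_minimal_sub k (⊤ : Ideal A) htop
  obtain ⟨x, hxI, hx0⟩ := Submodule.ne_bot_iff _ |>.mp hne
  exact Submodule.ne_bot_iff _ |>.mpr ⟨x, min_le_Lsub hm hu I₀ hmin x hxI, hx0⟩

theorem Rsub_ne_bot (k : Type u) [Field k] [Algebra k A] [FiniteDimensional k A] (hm : m.IsMaximal) (hu : ∀ I : Ideal A, I.IsMaximal → I = m) :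
    Rsub m ≠ (⊥ : Submodule Aᵐᵒᵖ A) := by
  haveI := loc_nontrivial hm
  have htop : (⊤ : Submodule Aᵐᵒᵖ A) ≠ ⊥ :=
    Submodule.ne_bot_iff _ |>.mpr ⟨1, Submodule.mem_top, one_ne_zero⟩
  obtain ⟨K₀, _, hne, hmin⟩ := exists_minimal_sub k (⊤ : Submodule Aᵐᵒᵖ A) htop
  obtain ⟨x, hxK, hx0⟩ := Submodule.ne_bot_iff _ |>.mp hne
  exact Submodule.ne_bot_iff _ |>.mpr ⟨x, min_le_Rsub hm hu K₀ hmin hxK, hx0⟩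

end Soc

section FactB
variable {k A : Type u} [Field k] [Ring A] [Algebra k A] [FiniteDimensional k A]
variable {m : Ideal A}

theorem finrank_R_le (hm : m.IsMaximal) (hu : ∀ I : Ideal A, I.IsMaximal → I = m)
    (hbij : Function.Bijective (dualEval A (A ⧸ m))) :
    Module.finrank k ((Rsub m).restrictScalars k)
      ≤ Module.finrank k (↥(Lsub m) →ₗ[Aᵐᵒᵖ] A) := by
  haveI := loc_nontrivial hm
  haveI := findim_H (k := k) hbij
  set L : Submodule Aᵐᵒᵖ A := Lsub m with hLdef
  haveI : FiniteDimensional k ↥L :=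
    FiniteDimensional.of_injective ((L.subtype).restrictScalars k) Subtype.val_injective
  have hLne : L ≠ ⊥ := Lsub_ne_bot k hm hu
  obtain ⟨g0, hg0L, hg00⟩ := Submodule.ne_bot_iff _ |>.mp hLne
  -- pick a maximal proper Aᵐᵒᵖ-submodule W of L, by maximizing finrank among proper ones
  set s : Set ℕ :=
    {n | ∃ W : Submodule Aᵐᵒᵖ ↥L, W ≠ ⊤ ∧ Module.finrank k (W.restrictScalars k) = n} with hsdef
  have hbotne : (⊥ : Submodule Aᵐᵒᵖ ↥L) ≠ ⊤ := by
    intro hbt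
    have : (⟨g0, hg0L⟩ : ↥L) ∈ (⊥ : Submodule Aᵐᵒᵖ ↥L) := hbt ▸ Submodule.mem_top
    rw [Submodule.mem_bot] at this
    exact hg00 (congrArg Subtype.val this)
  have hsne : s.Nonempty := ⟨_, ⊥, hbotne, rfl⟩
  have hsbdd : BddAbove s := by
    refine ⟨Module.finrank k ↥L, ?_⟩
    rintro n ⟨W, _, rfl⟩
    exact Submodule.finrank_le (W.restrictScalars k)
  obtain ⟨W, hWne, hWrank⟩ := Nat.sSup_mem hsne hsbdd
  have hWmax : ∀ W' : Submodule Aᵐᵒᵖ ↥L, W' ≠ ⊤ →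
      Module.finrank k (W'.restrictScalars k) ≤ sSup s :=
    fun W' h => le_csSup hsbdd ⟨W', h, rfl⟩
  set π := W.mkQ with hπdef
  -- the quotient is a simple module
  have hsimp : ∀ U : Submodule Aᵐᵒᵖ (↥L ⧸ W), U ≠ ⊥ → U = ⊤ := by
    intro U hU
    by_contra hUt
    set W' := U.comap π with hW'def
    have hmc : Submodule.map π W' = U :=
      Submodule.map_comap_eq_of_surjective (Submodule.mkQ_surjective W) U
    have hWW' : W ≤ W' := by
      intro w hw
      show π w ∈ U
      have : π w = 0 := by
        rw [hπdef, Submodule.mkQ_apply, Submodule.Quotient.mk_eq_zero]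
        exact hw
      rw [this]; exact U.zero_mem
    have hW'top : W' ≠ ⊤ := by
      intro h
      apply hUt
      rw [← hmc, h, Submodule.map_top, LinearMap.range_eq_top.mpr (Submodule.mkQ_surjective W)]
    have hWW'ne : W ≠ W' := by
      intro h
      apply hU
      rw [← hmc, ← h]
      apply (Submodule.eq_bot_iff _).mpr
      rintro u ⟨w, hw, rfl⟩
      rw [hπdef, Submodule.mkQ_apply, Submodule.Quotient.mk_eq_zero]
      exact hw
    have hlt : W.restrictScalars k < W'.restrictScalars k :=
      lt_of_le_of_ne (fun x hx => hWW' hx)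
        (fun h => hWW'ne (Submodule.restrictScalars_injective k _ _ h))
    have h1 : Module.finrank k (W.restrictScalars k)
        < Module.finrank k (W'.restrictScalars k) :=
      Submodule.finrank_lt_finrank_of_lt hlt
    have h2 := hWmax W' hW'top
    omega
  -- a generator outside W
  obtain ⟨g, hg⟩ : ∃ g : ↥L, g ∉ W := by
    by_contra hcon
    push_neg at hcon
    exact hWne (Submodule.eq_top_iff'.mpr hcon)
  set z₀ : ↥L ⧸ W := π g with hz₀def
  have hz₀ : z₀ ≠ 0 := by
    rw [hz₀def, hπdef, Submodule.mkQ_apply, ne_eq, Submodule.Quotient.mk_eq_zero]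
    exact hg
  -- the quotient is killed by m on the right
  have hQm : ∀ (v : ↥L ⧸ W) (c : A), c ∈ m → (MulOpposite.op c) • v = 0 := by
    intro v c hc
    by_contra h
    have hsp : Submodule.span Aᵐᵒᵖ {(MulOpposite.op c) • v} = ⊤ :=
      hsimp _ (by rwa [ne_eq, Submodule.span_singleton_eq_bot])
    have hv : v ∈ Submodule.span Aᵐᵒᵖ {(MulOpposite.op c) • v} := hsp ▸ Submodule.mem_top
    obtain ⟨b, hb⟩ := Submodule.mem_span_singleton.mp hv
    have hb2 : (MulOpposite.op (c * b.unop)) • v = v := by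
      conv_rhs => rw [← hb]
      rw [← mul_smul]
      congr 1

    have hc'm : c * b.unop ∈ m := loc_two_sided hm hu hc b.unop
    obtain ⟨y, hy1, _⟩ := unit_one_sub hm hu hc'm
    have hv0 : v = 0 := by
      have h0 : (MulOpposite.op ((1 : A) - c * b.unop)) • v = 0 := by
        have hop : MulOpposite.op ((1 : A) - c * b.unop)
            = 1 - MulOpposite.op (c * b.unop) := by simp
        rw [hop, sub_smul, one_smul, hb2, sub_self]
      calc v = (MulOpposite.op (((1 : A) - c * b.unop) * y)) • v := by
            rw [hy1, MulOpposite.op_one, one_smul]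
      _ = (MulOpposite.op y * MulOpposite.op ((1 : A) - c * b.unop)) • v := by
            rw [MulOpposite.op_mul]
      _ = (MulOpposite.op y) • ((MulOpposite.op ((1 : A) - c * b.unop)) • v) := by
            rw [mul_smul]
      _ = 0 := by rw [h0, smul_zero]
    exact h (by rw [hv0, smul_zero])
  -- the right-linear map `a ↦ (op a) • z₀ : A → L/W`
  set φ : A →ₗ[Aᵐᵒᵖ] (↥L ⧸ W) :=
    { toFun := fun a => (MulOpposite.op a) • z₀
      map_add' := by
        intro a b
        show (MulOpposite.op (a + b)) • z₀ = (MulOpposite.op a) • z₀ + (MulOpposite.op b) • z₀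
        rw [MulOpposite.op_add, add_smul]
      map_smul' := by
        intro b a
        show (MulOpposite.op (b • a)) • z₀ = b • ((MulOpposite.op a) • z₀)
        rw [MulOpposite.smul_eq_mul_unop, MulOpposite.op_mul, MulOpposite.op_unop, mul_smul] } with hφdef
  have hφ1 : φ 1 = z₀ := by
    show (MulOpposite.op (1 : A)) • z₀ = z₀
    rw [MulOpposite.op_one, one_smul]
  have hφker : ∀ a : A, φ a = 0 ↔ a ∈ m := by
    intro a
    constructor
    · intro h
      refine loc_right_max hm hu (LinearMap.ker φ) (fun c hc => ?_)
        (fun h1 => hz₀ (hφ1 ▸ (LinearMap.mem_ker.mp h1))) a (LinearMap.mem_ker.mpr h)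
      rw [LinearMap.mem_ker]
      show (MulOpposite.op c) • z₀ = 0
      exact hQm z₀ c hc
    · intro h
      show (MulOpposite.op a) • z₀ = 0
      exact hQm z₀ a h
  have hφsurj : Function.Surjective φ := by
    have hr : LinearMap.range φ = ⊤ := by
      refine hsimp _ (fun hbot => hz₀ ?_)
      have hmem : φ 1 ∈ LinearMap.range φ := ⟨1, rfl⟩
      rw [hbot, Submodule.mem_bot] at hmem
      rw [← hφ1]; exact hmem
    exact LinearMap.range_eq_top.mp hr
  set eE : (A ⧸ LinearMap.ker φ) →ₗ[Aᵐᵒᵖ] (↥L ⧸ W) :=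
    Submodule.liftQ _ φ le_rfl with hedef
  have heE : ∀ a : A, eE (Submodule.Quotient.mk a) = φ a := fun a => rfl
  have heEinj : Function.Injective eE := by
    refine (injective_iff_map_eq_zero eE).mpr (fun q => ?_)
    obtain ⟨a, rfl⟩ := Submodule.Quotient.mk_surjective _ q
    intro h
    rw [heE] at h
    rw [Submodule.Quotient.mk_eq_zero]
    exact LinearMap.mem_ker.mpr h
  have heEsurj : Function.Surjective eE := by
    intro v
    obtain ⟨a, ha⟩ := hφsurj v
    exact ⟨Submodule.Quotient.mk a, by rw [heE, ha]⟩
  set E := LinearEquiv.ofBijective eE ⟨heEinj, heEsurj⟩ with hEdef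
  have hE : ∀ a : A, E (Submodule.Quotient.mk a) = φ a := heE
  have hkerχ : ∀ z : A, z ∈ Rsub m → LinearMap.ker φ ≤ LinearMap.ker (χmap z) := by
    intro z hz a ha
    rw [LinearMap.mem_ker] at ha ⊢
    show z * a = 0
    exact hz a ((hφker a).mp ha)
  have hRmem : ∀ z : ↥((Rsub m).restrictScalars k), z.1 ∈ Rsub m := fun z => z.2
  set Λfun : ↥((Rsub m).restrictScalars k) → (↥L →ₗ[Aᵐᵒᵖ] A) := fun z =>
    ((Submodule.liftQ (LinearMap.ker φ) (χmap z.1) (hkerχ z.1 (hRmem z))).comp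
      (E.symm : (↥L ⧸ W) →ₗ[Aᵐᵒᵖ] (A ⧸ LinearMap.ker φ))).comp π with hΛdef
  have hsurj2 : ∀ x : ↥L, ∃ a : A, E (Submodule.Quotient.mk a) = π x := by
    intro x
    obtain ⟨q, hq⟩ := E.surjective (π x)
    obtain ⟨a, rfl⟩ := Submodule.Quotient.mk_surjective _ q
    exact ⟨a, hq⟩
  have heval : ∀ (z : ↥((Rsub m).restrictScalars k)) (x : ↥L) (a : A),
      E (Submodule.Quotient.mk a) = π x → Λfun z x = z.1 * a := by
    intro z x a hEa
    simp only [hΛdef, LinearMap.comp_apply, LinearEquiv.coe_coe]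
    rw [← hEa, LinearEquiv.symm_apply_apply, Submodule.liftQ_apply]
    rfl
  set Λ : ↥((Rsub m).restrictScalars k) →ₗ[k] (↥L →ₗ[Aᵐᵒᵖ] A) :=
    { toFun := Λfun
      map_add' := by
        intro z z'
        apply LinearMap.ext; intro x
        obtain ⟨a, ha⟩ := hsurj2 x
        rw [LinearMap.add_apply, heval (z + z') x a ha, heval z x a ha, heval z' x a ha]
        show (z.1 + z'.1) * a = z.1 * a + z'.1 * a
        rw [add_mul]
      map_smul' := by
        intro c z
        apply LinearMap.ext; intro x
        obtain ⟨a, ha⟩ := hsurj2 x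
        rw [RingHom.id_apply, LinearMap.smul_apply, heval (c • z) x a ha, heval z x a ha]
        show (c • z.1) * a = c • (z.1 * a)
        rw [smul_mul_assoc] } with hΛΛdef
  have hΛinj : Function.Injective Λ := by
    refine (injective_iff_map_eq_zero Λ).mpr (fun z hz0 => ?_)
    obtain ⟨a, ha⟩ := hsurj2 g
    have h1 : Λfun z g = z.1 * a := heval z g a ha
    have h2 : Λfun z g = 0 := by
      have := congrArg (fun ψ : ↥L →ₗ[Aᵐᵒᵖ] A => ψ g) hz0
      simpa [hΛΛdef] using this
    have hza : z.1 * a = 0 := by rw [← h1, h2]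
    have hφa : φ a = z₀ := by rw [← hE a, ha]
    have ham : a - 1 ∈ m := (hφker _).mp (by rw [map_sub, hφa, hφ1, sub_self])
    have hz1m : z.1 * (a - 1) = 0 := (hRmem z) _ ham
    have hz1 : z.1 = 0 := by
      have : z.1 * a - z.1 = 0 := by rw [← mul_one z.1, mul_assoc, one_mul, ← mul_sub]; exact hz1m
      rw [hza] at this
      simpa using this.symm
    exact Subtype.ext hz1
  exact LinearMap.finrank_le_finrank_of_injective hΛinj

end FactB

section Key
variable {k A : Type u} [Field k] [Ring A] [Algebra k A] [FiniteDimensional k A]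
variable {m : Ideal A}

theorem key_functional (hm : m.IsMaximal) (hu : ∀ I : Ideal A, I.IsMaximal → I = m)
    (hbij : Function.Bijective (dualEval A (A ⧸ m))) :
    ∃ f : Module.Dual k A, ∀ y : A, y ≠ 0 → ∃ b : A, f (y * b) ≠ 0 := by
  haveI := loc_nontrivial hm
  have hH := finrank_H (k := k) hbij
  have hRle := finrank_R_le (k := k) hm hu hbij
  have hminrank : ∀ K₀ : Submodule Aᵐᵒᵖ A, K₀ ≠ ⊥ →
      (∀ V : Submodule Aᵐᵒᵖ A, V ≤ K₀ → V ≠ ⊥ → V = K₀) →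
      K₀ ≤ Rsub m ∧ Module.finrank k (K₀.restrictScalars k)
        = Module.finrank k (↥(Lsub m) →ₗ[Aᵐᵒᵖ] A) := by
    intro K₀ hne hmin
    have hKR := min_le_Rsub hm hu K₀ hmin
    obtain ⟨z, hzK, hz0⟩ := Submodule.ne_bot_iff _ |>.mp hne
    have hsp : Submodule.span Aᵐᵒᵖ {z} = K₀ :=
      hmin _ ((Submodule.span_singleton_le_iff_mem _ _).mpr hzK)
        (by rwa [ne_eq, Submodule.span_singleton_eq_bot])
    have hzR : z ∈ Rsub m := hKR hzK
    have h1 := finrank_span_z (k := k) hm hu hzR hz0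
    refine ⟨hKR, ?_⟩
    rw [← hsp]
    omega
  have hRK : ∀ K : Submodule Aᵐᵒᵖ A, K ≠ ⊥ → Rsub m ≤ K := by
    intro K hK
    obtain ⟨K₀, hK₀K, hK₀ne, hK₀min⟩ := exists_minimal_sub k K hK
    obtain ⟨hK₀R, hK₀rank⟩ := hminrank K₀ hK₀ne hK₀min
    have heq : K₀.restrictScalars k = (Rsub m).restrictScalars k :=
      Submodule.eq_of_le_of_finrank_le (fun x hx => hK₀R hx) (hK₀rank.symm ▸ hRle)
    intro x hx
    have hx' : x ∈ K₀.restrictScalars k :=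
      heq ▸ (show x ∈ (Rsub m).restrictScalars k from hx)
    exact hK₀K hx'
  obtain ⟨r₀, hr₀R, hr₀0⟩ := Submodule.ne_bot_iff _ |>.mp (Rsub_ne_bot k hm hu)
  obtain ⟨f, hf⟩ : ∃ f : Module.Dual k A, f r₀ ≠ 0 := by
    by_contra hc
    push_neg at hc
    exact hr₀0 ((Module.forall_dual_apply_eq_zero_iff k r₀).mp hc)
  refine ⟨f, fun y hy => ?_⟩
  have hyK : Submodule.span Aᵐᵒᵖ {y} ≠ ⊥ := by rwa [ne_eq, Submodule.span_singleton_eq_bot]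
  have hr₀y : r₀ ∈ Submodule.span Aᵐᵒᵖ {y} := hRK _ hyK hr₀R
  obtain ⟨b, hb⟩ := Submodule.mem_span_singleton.mp hr₀y
  refine ⟨b.unop, ?_⟩
  rw [show y * b.unop = r₀ from by rw [← hb, MulOpposite.smul_eq_mul_unop]]
  exact hf

end Key

/-- Let `A` be a finite-dimensional local algebra over a field `k` (i.e. `A` has a unique
maximal left ideal). If the simple left `A`-module is reflexive, then `A` is
self-injective. -/
theorem selfinjective_of_local_of_simple_reflexive
    (k A : Type u) [Field k] [Ring A] [Algebra k A] [FiniteDimensional k A]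
    (hlocal : ∃! I : Ideal A, I.IsMaximal)
    (hrefl : ∀ (S : Type u) [AddCommGroup S] [Module A S],
      IsSimpleModule A S → Function.Bijective (dualEval A S)) :
    Module.Injective A A := by
  obtain ⟨m, hm, hu'⟩ := hlocal
  have hu : ∀ I : Ideal A, I.IsMaximal → I = m := hu'
  haveI := loc_nontrivial hm
  have hsimple : IsSimpleModule A (A ⧸ m) :=
    isSimpleModule_iff_isCoatom.mpr (Ideal.isMaximal_def.mp hm)
  have hbij := hrefl (A ⧸ m) hsimple
  obtain ⟨f, hf⟩ := key_functional (k := k) hm hu hbij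
  -- the pairing `a ↦ (b ↦ f (a * b))`
  set Φ : A →ₗ[k] Module.Dual k A :=
    LinearMap.mk₂ k (fun a b => f (a * b))
      (fun a a' b => by rw [add_mul, map_add])
      (fun c a b => by rw [smul_mul_assoc, map_smul])
      (fun a b b' => by rw [mul_add, map_add])
      (fun c a b => by rw [mul_smul_comm, map_smul]) with hΦdef
  have hΦapp : ∀ a b : A, Φ a b = f (a * b) := fun a b => rfl
  have hΦinj : Function.Injective Φ := by
    refine (injective_iff_map_eq_zero Φ).mpr (fun y hy => ?_)
    by_contra h0
    obtain ⟨b, hb⟩ := hf y h0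
    apply hb
    have := congrArg (fun g : Module.Dual k A => g b) hy
    simpa [hΦapp] using this
  have hrange : LinearMap.range Φ = ⊤ := by
    apply Submodule.eq_top_of_finrank_eq
    have h1 := LinearMap.finrank_range_add_finrank_ker Φ
    rw [LinearMap.ker_eq_bot.mpr hΦinj, finrank_bot] at h1
    rw [Subspace.dual_finrank_eq]
    omega
  have hΦsurj := LinearMap.range_eq_top.mp hrange
  set Φe := LinearEquiv.ofBijective Φ ⟨hΦinj, hΦsurj⟩ with hΦedef
  have hΨ : ∀ c a : A, (Φe.dualMap ((Module.evalEquiv k A) c)) a = f (a * c) := by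
    intro c a
    rw [LinearEquiv.dualMap_apply]
    have h2 : Φe a = Φ a := rfl
    rw [Module.evalEquiv_apply, Module.Dual.eval_apply, h2, hΦapp]
  have hsurjΨ : ∀ G : Module.Dual k A, ∃ u : A, ∀ a, f (a * u) = G a := by
    intro G
    refine ⟨(Module.evalEquiv k A).symm (Φe.dualMap.symm G), fun a => ?_⟩
    rw [← hΨ]
    simp
  have hinjΨ : ∀ y : A, (∀ a, f (a * y) = 0) → y = 0 := by
    intro y hy
    have h1 : Φe.dualMap ((Module.evalEquiv k A) y) = 0 :=
      LinearMap.ext fun a => by rw [hΨ]; exact hy a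
    have h2 : (Module.evalEquiv k A) y = 0 :=
      Φe.dualMap.injective (by rw [h1, map_zero])
    exact (Module.evalEquiv k A).injective (by rw [h2, map_zero])
  refine Module.Baer.injective ?_
  intro I gI
  set G₀ : ↥(I.restrictScalars k) →ₗ[k] k :=
    { toFun := fun x => f (gI ⟨x.1, x.2⟩)
      map_add' := by
        intro x y
        have hxy : (⟨(x + y).1, (x + y).2⟩ : ↥I) = ⟨x.1, x.2⟩ + ⟨y.1, y.2⟩ := rfl
        show f (gI ⟨(x + y).1, (x + y).2⟩) = f (gI ⟨x.1, x.2⟩) + f (gI ⟨y.1, y.2⟩)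
        rw [hxy, map_add, map_add]
      map_smul' := by
        intro c x
        have hcx : (⟨(c • x).1, (c • x).2⟩ : ↥I) = (algebraMap k A c) • ⟨x.1, x.2⟩ :=
          Subtype.ext (by simp [algebraMap_smul])
        show f (gI ⟨(c • x).1, (c • x).2⟩) = c • f (gI ⟨x.1, x.2⟩)
        rw [hcx, map_smul, algebraMap_smul, map_smul] } with hG₀def
  obtain ⟨G, hG⟩ := LinearMap.exists_extend G₀
  obtain ⟨u, huser⟩ := hsurjΨ G
  refine ⟨LinearMap.toSpanSingleton A A u, fun x hx => ?_⟩
  have hx'' : ∀ a : A, f (a * (x * u)) = f (a * gI ⟨x, hx⟩) := by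
    intro a
    have hax : a * x ∈ I := by
      have := I.smul_mem a hx
      rwa [smul_eq_mul] at this
    have e2 : f ((a * x) * u) = G (a * x) := huser (a * x)
    have e3 : G (a * x) = G₀ ⟨a * x, hax⟩ := by
      have := congrArg (fun h : ↥(I.restrictScalars k) →ₗ[k] k => h ⟨a * x, hax⟩) hG
      simpa using this
    have e5 : gI ⟨a * x, hax⟩ = a * gI ⟨x, hx⟩ := by
      have hs : (⟨a * x, hax⟩ : ↥I) = a • ⟨x, hx⟩ := Subtype.ext (by simp [smul_eq_mul])
      rw [hs, map_smul, smul_eq_mul]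
    calc f (a * (x * u)) = f ((a * x) * u) := by rw [mul_assoc]
    _ = G₀ ⟨a * x, hax⟩ := by rw [e2, e3]
    _ = f (gI ⟨a * x, hax⟩) := rfl
    _ = f (a * gI ⟨x, hx⟩) := by rw [e5]
  have hsub : x * u - gI ⟨x, hx⟩ = 0 := by
    apply hinjΨ
    intro a
    rw [mul_sub, map_sub, hx'' a, sub_self]
  show LinearMap.toSpanSingleton A A u x = gI ⟨x, hx⟩
  rw [LinearMap.toSpanSingleton_apply, smul_eq_mul, sub_eq_zero.mp hsub]
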